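/- For the dihedral group I_2(N) with constant multiplicity m, the operator L = Δ − 2m Σ_{k=0}^{N−1} ∂_{α_k}/(α_k, x) annihilates each basic quasiinvariant q_j and q̄_j, j = 1,…,N−1; i.e. these polynomials are m-harmonic. -/

import Mathlib

open Finset

/-- `z = x₁ + i x₂`. -/
noncomputable def zOf (x : ℝ × ℝ) : ℂ := (x.1 : ℂ) + (x.2 : ℂ) * Complex.I

/-- `q_j = Σ_t a_t z̄^{tN} z^{(m−t)N+j}` as a function on ℝ². -/
noncomputable def qj (N m j : ℕ) (a : Fin (m+1) → ℂ) (x : ℝ × ℝ) : ℂ :=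
  ∑ t : Fin (m+1),
    a t * ((starRingEnd ℂ) (zOf x)) ^ ((t:ℕ) * N) * (zOf x) ^ ((m - (t:ℕ)) * N + j)

/-- `q̄_j`, the complex conjugate of `q_j`. -/
noncomputable def qbarj (N m j : ℕ) (a : Fin (m+1) → ℂ) (x : ℝ × ℝ) : ℂ :=
  ∑ t : Fin (m+1),
    (starRingEnd ℂ) (a t) * (zOf x) ^ ((t:ℕ) * N)
      * ((starRingEnd ℂ) (zOf x)) ^ ((m - (t:ℕ)) * N + j)

/-- The gauged Calogero–Moser operator `L = Δ − 2m Σ_k ∂_{α_k}/(α_k, x)` of `I₂(N)`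
acting on ℂ-valued functions on ℝ². -/
noncomputable def LopC (N m : ℕ) (f : ℝ × ℝ → ℂ) (x : ℝ × ℝ) : ℂ :=
  (fderiv ℝ (fun y => fderiv ℝ f y ((1:ℝ), (0:ℝ))) x ((1:ℝ), (0:ℝ)) +
   fderiv ℝ (fun y => fderiv ℝ f y ((0:ℝ), (1:ℝ))) x ((0:ℝ), (1:ℝ)))
  - 2 * m * ∑ k ∈ range N,
      (fderiv ℝ f x (-Real.sin (Real.pi * k / N), Real.cos (Real.pi * k / N)))
      / ((((-Real.sin (Real.pi * k / N)) * x.1 + Real.cos (Real.pi * k / N) * x.2 : ℝ)) : ℂ)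


open Polynomial

lemma derivative_finset_prod (s : Finset ℕ) (f : ℕ → ℂ[X]) :
    derivative (∏ i ∈ s, f i) = ∑ i ∈ s, (∏ j ∈ s.erase i, f j) * derivative (f i) := by
  simp only [Finset.prod_eq_multiset_prod, Finset.sum_eq_multiset_sum, derivative_prod,
    Finset.erase_val]

lemma pow_sub_pow_prod {N : ℕ} (hN : 0 < N) {ζ : ℂ} (hζ : IsPrimitiveRoot ζ N) (z w : ℂ) :
    z ^ N - w ^ N = ∏ k ∈ range N, (z - ζ ^ k * w) := by
  have h := X_pow_sub_C_eq_prod hζ hN (rfl : w ^ N = w ^ N)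
  have := congrArg (Polynomial.eval z) h
  simpa [eval_prod] using this

lemma S1_sum {N : ℕ} (hN : 0 < N) {ζ : ℂ} (hζ : IsPrimitiveRoot ζ N) (z w : ℂ)
    (hne : ∀ k ∈ range N, z - ζ ^ k * w ≠ 0) :
    ∑ k ∈ range N, (z - ζ ^ k * w)⁻¹ = N * z ^ (N - 1) / (z ^ N - w ^ N) := by
  have hprod : z ^ N - w ^ N = ∏ k ∈ range N, (z - ζ ^ k * w) := pow_sub_pow_prod hN hζ z w
  have hD : z ^ N - w ^ N ≠ 0 := by rw [hprod]; exact Finset.prod_ne_zero_iff.2 hne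
  have hder : (N : ℂ) * z ^ (N - 1)
      = ∑ k ∈ range N, ∏ l ∈ (range N).erase k, (z - ζ ^ l * w) := by
    have h := X_pow_sub_C_eq_prod hζ hN (rfl : w ^ N = w ^ N)
    have h2 := congrArg (fun P => Polynomial.eval z (derivative P)) h
    simp only [derivative_sub, derivative_X_pow, derivative_C, sub_zero,
      derivative_finset_prod, derivative_X, derivative_sub, derivative_C, sub_zero, mul_one,
      eval_mul, eval_pow, eval_X, eval_natCast, eval_finset_sum, eval_prod, eval_sub, eval_C] at h2
    exact h2
  rw [eq_div_iff hD, Finset.sum_mul, hder, Finset.sum_congr rfl]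
  intro k hk
  rw [hprod, ← Finset.mul_prod_erase _ _ hk, inv_mul_cancel_left₀ (hne k hk)]

lemma S2_sum {N : ℕ} (hN : 2 ≤ N) {ζ : ℂ} (hζ : IsPrimitiveRoot ζ N) (z w : ℂ)
    (hne : ∀ k ∈ range N, z - ζ ^ k * w ≠ 0) :
    ∑ k ∈ range N, ζ ^ k * (z - ζ ^ k * w)⁻¹ = N * w ^ (N - 1) / (z ^ N - w ^ N) := by
  have hN0 : 0 < N := by omega
  have hprod : z ^ N - w ^ N = ∏ k ∈ range N, (z - ζ ^ k * w) := pow_sub_pow_prod hN0 hζ z w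
  have hD : z ^ N - w ^ N ≠ 0 := by rw [hprod]; exact Finset.prod_ne_zero_iff.2 hne
  rcases eq_or_ne w 0 with hw | hw
  · subst hw
    simp only [mul_zero, sub_zero]
    rw [← Finset.sum_mul, hζ.geom_sum_eq_zero (by omega), zero_mul,
      zero_pow (by omega : N - 1 ≠ 0)]
    simp
  · have hzz : z ^ (N - 1) * z = z ^ N := by
      rw [← pow_succ]; congr 1; omega
    have hstep : ∀ k ∈ range N, ζ ^ k * (z - ζ ^ k * w)⁻¹
        = (z * (z - ζ ^ k * w)⁻¹ - 1) * w⁻¹ := by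
      intro k hk
      have h' := hne k hk
      field_simp
      ring
    rw [Finset.sum_congr rfl hstep, ← Finset.sum_mul, Finset.sum_sub_distrib,
      ← Finset.mul_sum, S1_sum hN0 hζ z w hne]
    simp only [Finset.sum_const, Finset.card_range, nsmul_eq_mul, mul_one]
    have hww : w ^ (N - 1) * w = w ^ N := by
      rw [← pow_succ]; congr 1; omega
    field_simp
    linear_combination (↑N : ℂ) * hzz - (↑N : ℂ) * hww



namespace Helpers

noncomputable def wOf (x : ℝ × ℝ) : ℂ := (starRingEnd ℂ) (zOf x)

/-- the ℝ-CLM `v ↦ zOf v`. -/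
noncomputable def Zc : ℝ × ℝ →L[ℝ] ℂ :=
  Complex.ofRealCLM.comp (ContinuousLinearMap.fst ℝ ℝ ℝ) +
    (ContinuousLinearMap.snd ℝ ℝ ℝ).smulRight Complex.I

noncomputable def Wc : ℝ × ℝ →L[ℝ] ℂ :=
  (Complex.conjCLE : ℂ ≃L[ℝ] ℂ).toContinuousLinearMap.comp Zc

@[simp] lemma Zc_apply (v : ℝ × ℝ) : Zc v = zOf v := by
  simp [Zc, zOf, Complex.real_smul]

@[simp] lemma Wc_apply (v : ℝ × ℝ) : Wc v = wOf v := by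
  simp [Wc, wOf]

lemma hasFDerivAt_zOf (x : ℝ × ℝ) : HasFDerivAt zOf Zc x := by
  have := Zc.hasFDerivAt (x := x)
  apply this.congr_of_eventuallyEq
  filter_upwards with y using (Zc_apply y).symm

lemma hasFDerivAt_wOf (x : ℝ × ℝ) : HasFDerivAt wOf Wc x := by
  have := Wc.hasFDerivAt (x := x)
  apply this.congr_of_eventuallyEq
  filter_upwards with y using (Wc_apply y).symm

lemma hasFDerivAt_pow_comp {g : ℝ × ℝ → ℂ} {L : ℝ × ℝ →L[ℝ] ℂ} {x : ℝ × ℝ}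
    (hg : HasFDerivAt g L x) (n : ℕ) :
    HasFDerivAt (fun y => g y ^ n) (((n : ℂ) * g x ^ (n - 1)) • L) x := by
  induction n with
  | zero =>
    have h0 : HasFDerivAt (fun _ : ℝ × ℝ => (1 : ℂ)) (0 : ℝ × ℝ →L[ℝ] ℂ) x :=
      hasFDerivAt_const _ _
    simp only [pow_zero]
    exact h0.congr_fderiv (by refine ContinuousLinearMap.ext fun v => ?_; simp)
  | succ n ih =>
    simp only [pow_succ]
    refine (ih.mul hg).congr_fderiv ?_
    refine ContinuousLinearMap.ext fun v => ?_
    simp only [ContinuousLinearMap.add_apply, ContinuousLinearMap.coe_smul',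
      Pi.smul_apply, smul_eq_mul]
    rcases n with _ | n
    · simp
    · simp only [Nat.add_sub_cancel]
      push_cast
      rw [pow_succ]
      ring

/-- monomial `w^p z^q`. -/
noncomputable def Mc (p q : ℕ) (x : ℝ × ℝ) : ℂ := wOf x ^ p * zOf x ^ q

/-- directional derivative of `Mc p q` at `x` in direction `v`. -/
noncomputable def McD (p q : ℕ) (x v : ℝ × ℝ) : ℂ :=
  (p : ℂ) * wOf x ^ (p - 1) * zOf x ^ q * wOf v +
    (q : ℂ) * wOf x ^ p * zOf x ^ (q - 1) * zOf v

noncomputable def McL (p q : ℕ) (x : ℝ × ℝ) : ℝ × ℝ →L[ℝ] ℂ :=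
  ((p : ℂ) * wOf x ^ (p - 1) * zOf x ^ q) • Wc +
    ((q : ℂ) * wOf x ^ p * zOf x ^ (q - 1)) • Zc

@[simp] lemma McL_apply (p q : ℕ) (x v : ℝ × ℝ) : McL p q x v = McD p q x v := by
  simp [McL, McD]

lemma hasFDerivAt_Mc (p q : ℕ) (x : ℝ × ℝ) : HasFDerivAt (Mc p q) (McL p q x) x := by
  refine ((hasFDerivAt_pow_comp (hasFDerivAt_wOf x) p).mul
    (hasFDerivAt_pow_comp (hasFDerivAt_zOf x) q)).congr_fderiv ?_
  refine ContinuousLinearMap.ext fun v => ?_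
  simp only [McL, ContinuousLinearMap.add_apply, ContinuousLinearMap.coe_smul', Pi.smul_apply,
    smul_eq_mul]
  ring

/-- sums of the form `∑ c i * Mc (P i) (Q i)`. -/
noncomputable def combo (n : ℕ) (c : ℕ → ℂ) (P Q : ℕ → ℕ) : (ℝ × ℝ) → ℂ :=
  fun y => ∑ i ∈ range n, c i * Mc (P i) (Q i) y

lemma hasFDerivAt_combo (n : ℕ) (c : ℕ → ℂ) (P Q : ℕ → ℕ) (x : ℝ × ℝ) :
    HasFDerivAt (combo n c P Q) (∑ i ∈ range n, c i • McL (P i) (Q i) x) x :=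
  HasFDerivAt.fun_sum fun i _ => (hasFDerivAt_Mc (P i) (Q i) x).const_mul (c i)

lemma fderiv_combo (n : ℕ) (c : ℕ → ℂ) (P Q : ℕ → ℕ) (x v : ℝ × ℝ) :
    fderiv ℝ (combo n c P Q) x v = ∑ i ∈ range n, c i * McD (P i) (Q i) x v := by
  rw [(hasFDerivAt_combo n c P Q x).fderiv]
  simp


lemma differentiableAt_combo (n : ℕ) (c : ℕ → ℂ) (P Q : ℕ → ℕ) (x : ℝ × ℝ) :
    DifferentiableAt ℝ (combo n c P Q) x :=
  (hasFDerivAt_combo n c P Q x).differentiableAt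

@[simp] lemma zOf_e1 : zOf ((1:ℝ), (0:ℝ)) = 1 := by simp [zOf]
@[simp] lemma zOf_e2 : zOf ((0:ℝ), (1:ℝ)) = Complex.I := by simp [zOf]
@[simp] lemma wOf_e1 : wOf ((1:ℝ), (0:ℝ)) = 1 := by simp [wOf]
@[simp] lemma wOf_e2 : wOf ((0:ℝ), (1:ℝ)) = -Complex.I := by simp [wOf]

lemma secondD (n : ℕ) (c : ℕ → ℂ) (P Q : ℕ → ℕ) (v x : ℝ × ℝ) :
    fderiv ℝ (fun y => fderiv ℝ (combo n c P Q) y v) x v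
      = ∑ i ∈ range n, ((c i * P i * wOf v) * McD (P i - 1) (Q i) x v
          + (c i * Q i * zOf v) * McD (P i) (Q i - 1) x v) := by
  have h1 : (fun y => fderiv ℝ (combo n c P Q) y v)
      = fun y => ∑ i ∈ range n, ((c i * P i * wOf v) * Mc (P i - 1) (Q i) y
          + (c i * Q i * zOf v) * Mc (P i) (Q i - 1) y) := by
    funext y
    rw [fderiv_combo]
    refine Finset.sum_congr rfl fun i _ => ?_
    simp only [McD, Mc]
    ring
  rw [h1]
  have h2 : HasFDerivAt (fun y => ∑ i ∈ range n, ((c i * P i * wOf v) * Mc (P i - 1) (Q i) y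
          + (c i * Q i * zOf v) * Mc (P i) (Q i - 1) y))
      (∑ i ∈ range n, ((c i * P i * wOf v) • McL (P i - 1) (Q i) x
          + (c i * Q i * zOf v) • McL (P i) (Q i - 1) x)) x :=
    HasFDerivAt.fun_sum fun i _ =>
      ((hasFDerivAt_Mc _ _ x).const_mul _).add ((hasFDerivAt_Mc _ _ x).const_mul _)
  rw [h2.fderiv]
  simp

lemma lap_combo (n : ℕ) (c : ℕ → ℂ) (P Q : ℕ → ℕ) (x : ℝ × ℝ) :
    fderiv ℝ (fun y => fderiv ℝ (combo n c P Q) y ((1:ℝ),(0:ℝ))) x ((1:ℝ),(0:ℝ))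
      + fderiv ℝ (fun y => fderiv ℝ (combo n c P Q) y ((0:ℝ),(1:ℝ))) x ((0:ℝ),(1:ℝ))
      = ∑ i ∈ range n, c i * (4 * P i * Q i) * Mc (P i - 1) (Q i - 1) x := by
  rw [secondD, secondD, ← Finset.sum_add_distrib]
  refine Finset.sum_congr rfl fun i _ => ?_
  simp only [McD, Mc, zOf_e1, zOf_e2, wOf_e1, wOf_e2]
  push_cast
  linear_combination (((P i : ℂ) * ((P i - 1 : ℕ) : ℂ) * wOf x ^ (P i - 1 - 1) * zOf x ^ Q i)
    - 2 * ((P i : ℂ) * (Q i : ℂ) * wOf x ^ (P i - 1) * zOf x ^ (Q i - 1))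
    + ((Q i : ℂ) * ((Q i - 1 : ℕ) : ℂ) * wOf x ^ P i * zOf x ^ (Q i - 1 - 1)))
      * (c i) * Complex.I_sq

lemma wOf_eq (x : ℝ × ℝ) : wOf x = (x.1 : ℂ) - (x.2 : ℂ) * Complex.I := by
  simp [wOf, zOf, Complex.conj_ofReal]; ring

noncomputable def Ee (θ : ℝ) : ℂ := Complex.exp ((θ : ℂ) * Complex.I)
noncomputable def Ff (θ : ℝ) : ℂ := Complex.exp (-(θ : ℂ) * Complex.I)

lemma hEF (θ : ℝ) : Ee θ * Ff θ = 1 := by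
  rw [Ee, Ff, ← Complex.exp_add]; ring_nf; exact Complex.exp_zero

lemma hEcs (θ : ℝ) : Ee θ = (Real.cos θ : ℂ) + (Real.sin θ : ℂ) * Complex.I := by
  rw [Ee, Complex.exp_mul_I, Complex.ofReal_cos, Complex.ofReal_sin]

lemma hFcs (θ : ℝ) : Ff θ = (Real.cos θ : ℂ) - (Real.sin θ : ℂ) * Complex.I := by
  rw [Ff, Complex.exp_mul_I, Complex.ofReal_cos, Complex.ofReal_sin, Complex.cos_neg,
    Complex.sin_neg]
  ring

lemma Ee_ne (θ : ℝ) : Ee θ ≠ 0 := Complex.exp_ne_zero _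

lemma zOf_alpha (θ : ℝ) : zOf (-Real.sin θ, Real.cos θ) = Complex.I * Ee θ := by
  rw [hEcs]
  show ((-Real.sin θ : ℝ) : ℂ) + ((Real.cos θ : ℝ) : ℂ) * Complex.I = _
  push_cast
  linear_combination (-(Complex.sin (θ:ℂ))) * Complex.I_sq

lemma wOf_alpha (θ : ℝ) : wOf (-Real.sin θ, Real.cos θ) = -Complex.I * Ff θ := by
  rw [hFcs, wOf_eq]
  show ((-Real.sin θ : ℝ) : ℂ) - ((Real.cos θ : ℝ) : ℂ) * Complex.I = _
  push_cast
  linear_combination (-(Complex.sin (θ:ℂ))) * Complex.I_sq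

lemma hd_eq (θ : ℝ) (x : ℝ × ℝ) :
    (((-Real.sin θ) * x.1 + Real.cos θ * x.2 : ℝ) : ℂ) * (2 * Complex.I)
      = Ff θ * zOf x - Ee θ * wOf x := by
  rw [hEcs, hFcs, wOf_eq, zOf]
  push_cast
  ring

lemma hE2 (Nn k : ℕ) : Ee (Real.pi * k / Nn) ^ 2 = Complex.exp (2 * Real.pi * Complex.I / Nn) ^ k := by
  rw [Ee, ← Complex.exp_nat_mul, ← Complex.exp_nat_mul]
  congr 1
  push_cast
  ring

lemma hz_eq (Nn k : ℕ) (x : ℝ × ℝ) :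
    zOf x - Complex.exp (2 * Real.pi * Complex.I / Nn) ^ k * wOf x
      = Ee (Real.pi * k / Nn) * ((((-Real.sin (Real.pi * k / Nn)) * x.1
          + Real.cos (Real.pi * k / Nn) * x.2 : ℝ) : ℂ) * (2 * Complex.I)) := by
  rw [hd_eq, ← hE2]
  linear_combination (-(zOf x)) * hEF (Real.pi * k / Nn)

lemma hz_ne (Nn k : ℕ) (x : ℝ × ℝ)
    (hd : (-Real.sin (Real.pi * k / Nn)) * x.1 + Real.cos (Real.pi * k / Nn) * x.2 ≠ 0) :
    zOf x - Complex.exp (2 * Real.pi * Complex.I / Nn) ^ k * wOf x ≠ 0 := by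
  rw [hz_eq]
  refine mul_ne_zero (Ee_ne _) (mul_ne_zero ?_ (by simp [Complex.I_ne_zero]))
  exact_mod_cast Complex.ofReal_ne_zero.mpr hd

lemma denom_ne (Nn : ℕ) (hN : 0 < Nn) (x : ℝ × ℝ)
    (hreg : ∀ k < Nn, (-Real.sin (Real.pi * k / Nn)) * x.1
      + Real.cos (Real.pi * k / Nn) * x.2 ≠ 0) :
    zOf x ^ Nn - wOf x ^ Nn ≠ 0 := by
  rw [pow_sub_pow_prod hN (Complex.isPrimitiveRoot_exp Nn (by omega))]
  exact Finset.prod_ne_zero_iff.2 fun k hk => hz_ne Nn k x (hreg k (mem_range.mp hk))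

lemma term_eq (Nn k p q : ℕ) (x : ℝ × ℝ)
    (hd : (-Real.sin (Real.pi * k / Nn)) * x.1 + Real.cos (Real.pi * k / Nn) * x.2 ≠ 0) :
    McD p q x (-Real.sin (Real.pi * k / Nn), Real.cos (Real.pi * k / Nn))
        / ((((-Real.sin (Real.pi * k / Nn)) * x.1 + Real.cos (Real.pi * k / Nn) * x.2 : ℝ)) : ℂ)
      = (2 * p * (wOf x ^ (p-1) * zOf x ^ q)
          - 2 * q * (wOf x ^ p * zOf x ^ (q-1)) * Complex.exp (2 * Real.pi * Complex.I / Nn) ^ k)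
        * (zOf x - Complex.exp (2 * Real.pi * Complex.I / Nn) ^ k * wOf x)⁻¹ := by
  have hdC : ((((-Real.sin (Real.pi * k / Nn)) * x.1
      + Real.cos (Real.pi * k / Nn) * x.2 : ℝ)) : ℂ) ≠ 0 := Complex.ofReal_ne_zero.mpr hd
  have hzn := hz_ne Nn k x hd
  set θ := Real.pi * k / Nn with hθ
  set D : ℂ := ((((-Real.sin θ) * x.1 + Real.cos θ * x.2 : ℝ)) : ℂ) with hD
  have hkey : McD p q x (-Real.sin θ, Real.cos θ)
      * (zOf x - Complex.exp (2 * Real.pi * Complex.I / Nn) ^ k * wOf x)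
      = (2 * p * (wOf x ^ (p-1) * zOf x ^ q)
          - 2 * q * (wOf x ^ p * zOf x ^ (q-1)) * Complex.exp (2 * Real.pi * Complex.I / Nn) ^ k)
        * D := by
    simp only [McD, zOf_alpha, wOf_alpha]
    rw [hz_eq, ← hE2]
    linear_combination ((-2) * p * (wOf x ^ (p-1) * zOf x ^ q) * D * Ff θ * Ee θ
        + 2 * q * (wOf x ^ p * zOf x ^ (q-1)) * (Ee θ) ^ 2 * D) * Complex.I_sq
      + (2 * (p:ℂ) * (wOf x ^ (p-1) * zOf x ^ q) * D) * hEF θ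
  field_simp
  linear_combination hkey

lemma singular_sum (Nn : ℕ) (hN : 2 ≤ Nn) (p q : ℕ) (x : ℝ × ℝ)
    (hreg : ∀ k < Nn, (-Real.sin (Real.pi * k / Nn)) * x.1
      + Real.cos (Real.pi * k / Nn) * x.2 ≠ 0) :
    ∑ k ∈ range Nn, McD p q x (-Real.sin (Real.pi * k / Nn), Real.cos (Real.pi * k / Nn))
        / ((((-Real.sin (Real.pi * k / Nn)) * x.1 + Real.cos (Real.pi * k / Nn) * x.2 : ℝ)) : ℂ)
      = (2 * p * Nn * (wOf x ^ (p-1) * zOf x ^ q) * zOf x ^ (Nn - 1)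
          - 2 * q * Nn * (wOf x ^ p * zOf x ^ (q-1)) * wOf x ^ (Nn - 1))
        / (zOf x ^ Nn - wOf x ^ Nn) := by
  have hN0 : 0 < Nn := by omega
  have hζ := Complex.isPrimitiveRoot_exp Nn (by omega)
  have hne : ∀ k ∈ range Nn,
      zOf x - Complex.exp (2 * Real.pi * Complex.I / Nn) ^ k * wOf x ≠ 0 :=
    fun k hk => hz_ne Nn k x (hreg k (mem_range.mp hk))
  have hD : zOf x ^ Nn - wOf x ^ Nn ≠ 0 := by
    rw [pow_sub_pow_prod hN0 hζ]
    exact Finset.prod_ne_zero_iff.2 hne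
  rw [Finset.sum_congr rfl fun k hk => term_eq Nn k p q x (hreg k (mem_range.mp hk))]
  have expand : ∀ k ∈ range Nn,
      (2 * (p:ℂ) * (wOf x ^ (p-1) * zOf x ^ q)
          - 2 * q * (wOf x ^ p * zOf x ^ (q-1)) * Complex.exp (2 * Real.pi * Complex.I / Nn) ^ k)
        * (zOf x - Complex.exp (2 * Real.pi * Complex.I / Nn) ^ k * wOf x)⁻¹
      = 2 * p * (wOf x ^ (p-1) * zOf x ^ q)
          * (zOf x - Complex.exp (2 * Real.pi * Complex.I / Nn) ^ k * wOf x)⁻¹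
        - 2 * q * (wOf x ^ p * zOf x ^ (q-1))
          * (Complex.exp (2 * Real.pi * Complex.I / Nn) ^ k
            * (zOf x - Complex.exp (2 * Real.pi * Complex.I / Nn) ^ k * wOf x)⁻¹) := by
    intro k hk; ring
  rw [Finset.sum_congr rfl expand, Finset.sum_sub_distrib, ← Finset.mul_sum, ← Finset.mul_sum,
    S1_sum hN0 hζ _ _ hne, S2_sum hN hζ _ _ hne]
  field_simp


/-- The operator applied to a `combo`, before algebraic simplification. -/
noncomputable def LopC' (Nn mm : ℕ) (f : ℝ × ℝ → ℂ) (x : ℝ × ℝ) : ℂ :=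
  (fderiv ℝ (fun y => fderiv ℝ f y ((1:ℝ), (0:ℝ))) x ((1:ℝ), (0:ℝ)) +
   fderiv ℝ (fun y => fderiv ℝ f y ((0:ℝ), (1:ℝ))) x ((0:ℝ), (1:ℝ)))
  - 2 * mm * ∑ k ∈ range Nn,
      (fderiv ℝ f x (-Real.sin (Real.pi * k / Nn), Real.cos (Real.pi * k / Nn)))
      / ((((-Real.sin (Real.pi * k / Nn)) * x.1 + Real.cos (Real.pi * k / Nn) * x.2 : ℝ)) : ℂ)

lemma LopC'_combo (Nn mm : ℕ) (hN : 2 ≤ Nn) (n : ℕ) (c : ℕ → ℂ) (P Q : ℕ → ℕ) (x : ℝ × ℝ)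
    (hreg : ∀ k < Nn, (-Real.sin (Real.pi * k / Nn)) * x.1
      + Real.cos (Real.pi * k / Nn) * x.2 ≠ 0) :
    LopC' Nn mm (combo n c P Q) x
      = ∑ i ∈ range n, c i * ((4 * P i * Q i) * Mc (P i - 1) (Q i - 1) x
          - 2 * mm * ((2 * P i * Nn * (wOf x ^ (P i - 1) * zOf x ^ Q i) * zOf x ^ (Nn - 1)
              - 2 * Q i * Nn * (wOf x ^ P i * zOf x ^ (Q i - 1)) * wOf x ^ (Nn - 1))
            / (zOf x ^ Nn - wOf x ^ Nn))) := by
  have hsing : ∑ k ∈ range Nn,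
      (fderiv ℝ (combo n c P Q) x (-Real.sin (Real.pi * k / Nn), Real.cos (Real.pi * k / Nn)))
      / ((((-Real.sin (Real.pi * k / Nn)) * x.1 + Real.cos (Real.pi * k / Nn) * x.2 : ℝ)) : ℂ)
      = ∑ i ∈ range n, c i *
          ((2 * P i * Nn * (wOf x ^ (P i - 1) * zOf x ^ Q i) * zOf x ^ (Nn - 1)
              - 2 * Q i * Nn * (wOf x ^ P i * zOf x ^ (Q i - 1)) * wOf x ^ (Nn - 1))
            / (zOf x ^ Nn - wOf x ^ Nn)) := by
    have h1 : ∀ k ∈ range Nn,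
        (fderiv ℝ (combo n c P Q) x (-Real.sin (Real.pi * k / Nn), Real.cos (Real.pi * k / Nn)))
        / ((((-Real.sin (Real.pi * k / Nn)) * x.1 + Real.cos (Real.pi * k / Nn) * x.2 : ℝ)) : ℂ)
        = ∑ i ∈ range n, c i * (McD (P i) (Q i) x
            (-Real.sin (Real.pi * k / Nn), Real.cos (Real.pi * k / Nn))
          / ((((-Real.sin (Real.pi * k / Nn)) * x.1
              + Real.cos (Real.pi * k / Nn) * x.2 : ℝ)) : ℂ)) := by
      intro k hk
      rw [fderiv_combo, Finset.sum_div]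
      exact Finset.sum_congr rfl fun i _ => by rw [mul_div_assoc]
    rw [Finset.sum_congr rfl h1, Finset.sum_comm]
    refine Finset.sum_congr rfl fun i _ => ?_
    rw [← Finset.mul_sum, singular_sum Nn hN (P i) (Q i) x hreg]
  rw [LopC', lap_combo, hsing, Finset.mul_sum, ← Finset.sum_sub_distrib]
  exact Finset.sum_congr rfl fun i _ => by ring

lemma LopC'_conj (Nn mm : ℕ) (n : ℕ) (c : ℕ → ℂ) (P Q : ℕ → ℕ) (x : ℝ × ℝ) :
    LopC' Nn mm (fun y => (starRingEnd ℂ) (combo n c P Q y)) x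
      = (starRingEnd ℂ) (LopC' Nn mm (combo n c P Q) x) := by
  set L := Complex.conjCLE.toContinuousLinearMap with hL
  have hLapp : ∀ z : ℂ, L z = (starRingEnd ℂ) z := fun z => rfl
  have hder : ∀ (y : ℝ × ℝ),
      fderiv ℝ (fun y => (starRingEnd ℂ) (combo n c P Q y)) y
        = L.comp (fderiv ℝ (combo n c P Q) y) := fun y =>
    (L.hasFDerivAt.comp y (differentiableAt_combo n c P Q y).hasFDerivAt).fderiv
  have hsecond : ∀ v : ℝ × ℝ,
      fderiv ℝ (fun y => fderiv ℝ (fun y' => (starRingEnd ℂ) (combo n c P Q y')) y v) x v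
        = (starRingEnd ℂ) (fderiv ℝ (fun y => fderiv ℝ (combo n c P Q) y v) x v) := by
    intro v
    have e1 : (fun y => fderiv ℝ (fun y' => (starRingEnd ℂ) (combo n c P Q y')) y v)
        = fun y => (starRingEnd ℂ) (fderiv ℝ (combo n c P Q) y v) := by
      funext y; rw [hder y]; rfl
    rw [e1]
    have hg : ∀ y, HasFDerivAt (fun y => fderiv ℝ (combo n c P Q) y v)
        ((∑ i ∈ range n, ((c i * P i * wOf v) • McL (P i - 1) (Q i) y
          + (c i * Q i * zOf v) • McL (P i) (Q i - 1) y))) y := by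
      intro y
      have h1 : (fun y => fderiv ℝ (combo n c P Q) y v)
          = fun y => ∑ i ∈ range n, ((c i * P i * wOf v) * Mc (P i - 1) (Q i) y
              + (c i * Q i * zOf v) * Mc (P i) (Q i - 1) y) := by
        funext y'
        rw [fderiv_combo]
        refine Finset.sum_congr rfl fun i _ => ?_
        simp only [McD, Mc]
        ring
      rw [h1]
      exact HasFDerivAt.fun_sum fun i _ =>
        ((hasFDerivAt_Mc _ _ y).const_mul _).add ((hasFDerivAt_Mc _ _ y).const_mul _)
    have hcomp := (L.hasFDerivAt.comp x (hg x).differentiableAt.hasFDerivAt).fderiv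
    have h2 : (fun y => (starRingEnd ℂ) ((fderiv ℝ (combo n c P Q) y) v))
        = ⇑L ∘ (fun y => fderiv ℝ (combo n c P Q) y v) := rfl
    rw [h2, hcomp]
    rfl
  rw [LopC', LopC', hsecond, hsecond, map_sub, map_add, map_mul, map_mul, map_sum]
  simp only [map_ofNat, map_natCast]
  congr 2
  refine Finset.sum_congr rfl fun k _ => ?_
  rw [map_div₀, Complex.conj_ofReal, hder x]
  rfl


section Alg
variable (m t : ℕ)

/-- the index set `{0,…,m} \ {t, t+1}`. -/
def Sset (m t : ℕ) : Finset ℕ := ((range (m+1)).erase t).erase (t+1)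

lemma mem_Sset {m t a : ℕ} : a ∈ Sset m t ↔ a ≠ t + 1 ∧ a ≠ t ∧ a < m + 1 := by
  simp [Sset, Finset.mem_erase, Finset.mem_range]

lemma prod_shift (ht : t < m) (F : ℕ → ℤ) :
    (∏ r ∈ Sset m t, F (r+1)) * (F 0 * F (t+1) * F (t+2))
      = (∏ r ∈ Sset m t, F r) * (F t * F (t+1) * F (m+1)) := by
  have himg : ∏ r ∈ Sset m t, F (r+1) = ∏ r ∈ (Sset m t).image Nat.succ, F r :=
    (Finset.prod_image (fun a _ b _ h => Nat.succ_injective h)).symm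
  have hmemimg : ∀ a : ℕ, a ∈ (Sset m t).image Nat.succ ↔
      a ≠ 0 ∧ a ≠ t + 2 ∧ a ≠ t + 1 ∧ a < m + 2 := by
    intro a
    simp only [Finset.mem_image, mem_Sset]
    constructor
    · rintro ⟨b, ⟨hb1, hb2, hb3⟩, rfl⟩; omega
    · rintro ⟨h0, h1, h2, h3⟩; exact ⟨a - 1, by omega, by omega⟩
  have n2 : t+2 ∉ (Sset m t).image Nat.succ := by rw [hmemimg]; omega
  have n1 : t+1 ∉ insert (t+2) ((Sset m t).image Nat.succ) := by
    simp only [Finset.mem_insert, hmemimg]; omega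
  have n0 : 0 ∉ insert (t+1) (insert (t+2) ((Sset m t).image Nat.succ)) := by
    simp only [Finset.mem_insert, hmemimg]; omega
  have e1 : insert 0 (insert (t+1) (insert (t+2) ((Sset m t).image Nat.succ))) = range (m+2) := by
    ext a
    simp only [Finset.mem_insert, hmemimg, Finset.mem_range]
    omega
  have nm : m+1 ∉ Sset m t := by rw [mem_Sset]; omega
  have nt1 : t+1 ∉ insert (m+1) (Sset m t) := by
    simp only [Finset.mem_insert, mem_Sset]; omega
  have nt : t ∉ insert (t+1) (insert (m+1) (Sset m t)) := by
    simp only [Finset.mem_insert, mem_Sset]; omega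
  have e2 : insert t (insert (t+1) (insert (m+1) (Sset m t))) = range (m+2) := by
    ext a
    simp only [Finset.mem_insert, mem_Sset, Finset.mem_range]
    omega
  have hL : ∏ r ∈ range (m+2), F r
      = F 0 * (F (t+1) * (F (t+2) * ∏ r ∈ (Sset m t).image Nat.succ, F r)) := by
    rw [← e1, Finset.prod_insert n0, Finset.prod_insert n1, Finset.prod_insert n2]
  have hR : ∏ r ∈ range (m+2), F r
      = F t * (F (t+1) * (F (m+1) * ∏ r ∈ Sset m t, F r)) := by
    rw [← e2, Finset.prod_insert nt, Finset.prod_insert nt1, Finset.prod_insert nm]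
  rw [himg]
  linear_combination hR - hL

/-- the set `{0,…,m+1} \ {t, t+1, t+2}`. -/
def Wset (m t : ℕ) : Finset ℕ := (((range (m+2)).erase t).erase (t+1)).erase (t+2)

lemma mem_Wset {m t a : ℕ} : a ∈ Wset m t ↔ a ≠ t+2 ∧ a ≠ t+1 ∧ a ≠ t ∧ a < m + 2 := by
  simp [Wset, Finset.mem_erase, Finset.mem_range]

lemma prod_lin (ht : t < m) :
    ((t:ℤ)+1) * (∏ r ∈ Sset m t, ((r:ℤ) - t)) = ((m:ℤ) - t) * (∏ r ∈ Sset m t, ((r:ℤ) - t - 1)) := by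
  set F : ℕ → ℤ := fun r => (r:ℤ) - (t+1) with hF
  have himg : ∏ r ∈ Sset m t, ((r:ℤ) - t) = ∏ r ∈ (Sset m t).image Nat.succ, F r := by
    rw [Finset.prod_image (fun a _ b _ h => Nat.succ_injective h)]
    refine Finset.prod_congr rfl fun r _ => ?_
    simp only [hF]
    push_cast
    ring
  have hmemimg : ∀ a : ℕ, a ∈ (Sset m t).image Nat.succ ↔
      a ≠ 0 ∧ a ≠ t + 2 ∧ a ≠ t + 1 ∧ a < m + 2 := by
    intro a
    simp only [Finset.mem_image, mem_Sset]
    constructor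
    · rintro ⟨b, ⟨hb1, hb2, hb3⟩, rfl⟩; omega
    · rintro ⟨h0, h1, h2, h3⟩; exact ⟨a - 1, by omega, by omega⟩
  have n0 : 0 ∉ (Sset m t).image Nat.succ := by rw [hmemimg]; omega
  have ntW : t ∉ Wset m t := by rw [mem_Wset]; omega
  have e3 : insert 0 ((Sset m t).image Nat.succ) = insert t (Wset m t) := by
    ext a
    simp only [Finset.mem_insert, hmemimg, mem_Wset]
    omega
  have nmS : m+1 ∉ Sset m t := by rw [mem_Sset]; omega
  have nt2W : t+2 ∉ Wset m t := by rw [mem_Wset]; omega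
  have e4 : insert (m+1) (Sset m t) = insert (t+2) (Wset m t) := by
    ext a
    simp only [Finset.mem_insert, mem_Sset, mem_Wset]
    omega
  have hA : ((t:ℤ)+1) * (∏ r ∈ Sset m t, ((r:ℤ) - t)) = ∏ r ∈ Wset m t, F r := by
    have h1 : ∏ r ∈ insert 0 ((Sset m t).image Nat.succ), F r
        = ∏ r ∈ insert t (Wset m t), F r := by rw [e3]
    rw [Finset.prod_insert n0, Finset.prod_insert ntW] at h1
    rw [himg]
    have hF0 : F 0 = -((t:ℤ)+1) := by simp only [hF]; push_cast; ring
    have hFt : F t = -1 := by simp only [hF]; push_cast; ring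
    rw [hF0, hFt] at h1
    linear_combination -h1
  have hB : ((m:ℤ) - t) * (∏ r ∈ Sset m t, ((r:ℤ) - t - 1)) = ∏ r ∈ Wset m t, F r := by
    have h1 : ∏ r ∈ insert (m+1) (Sset m t), F r
        = ∏ r ∈ insert (t+2) (Wset m t), F r := by rw [e4]
    rw [Finset.prod_insert nmS, Finset.prod_insert nt2W] at h1
    have hFm : F (m+1) = (m:ℤ) - t := by simp only [hF]; push_cast; ring
    have hFt2 : F (t+2) = 1 := by simp only [hF]; push_cast; ring
    have hprodeq : ∏ r ∈ Sset m t, ((r:ℤ) - t - 1) = ∏ r ∈ Sset m t, F r := by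
      refine Finset.prod_congr rfl fun r _ => by simp only [hF]; push_cast; ring
    rw [hFm, hFt2] at h1
    rw [hprodeq]
    linear_combination h1
  rw [hA, hB]

end Alg

section Core
variable (N m j : ℕ)

def lamZ (t : ℕ) : ℤ := ((m:ℤ) - 2*t)*N + j
def muZ (t : ℕ) : ℤ := lamZ N m j t ^ 2
def KfZ (t r : ℕ) : ℤ := ((m:ℤ) - t - r)*N + j

lemma castne (hN : 2 ≤ N) (hj1 : 1 ≤ j) (hj2 : j ≤ N - 1) (A : ℤ) : A * N + j ≠ 0 := by
  intro h
  have hdvd : (N:ℤ) ∣ (j:ℤ) := ⟨-A, by linarith⟩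
  have h2 := Int.le_of_dvd (by exact_mod_cast hj1) hdvd
  have h3 : N ≤ j := by exact_mod_cast h2
  omega

lemma lamZ_ne (hN : 2 ≤ N) (hj1 : 1 ≤ j) (hj2 : j ≤ N - 1) (t : ℕ) : lamZ N m j t ≠ 0 :=
  castne N j hN hj1 hj2 _

lemma KfZ_ne (hN : 2 ≤ N) (hj1 : 1 ≤ j) (hj2 : j ≤ N - 1) (t r : ℕ) : KfZ N m j t r ≠ 0 :=
  castne N j hN hj1 hj2 _

lemma fac0 (t : ℕ) (r : ℕ) :
    muZ N m j t - muZ N m j r = 4*N*((r:ℤ) - t) * KfZ N m j t r := by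
  simp only [muZ, lamZ, KfZ]; ring

lemma fac1 (t : ℕ) (r : ℕ) :
    muZ N m j (t+1) - muZ N m j r = 4*N*((r:ℤ) - t - 1) * KfZ N m j t (r+1) := by
  simp only [muZ, lamZ, KfZ]; push_cast; ring

lemma identI (hN : 2 ≤ N) (hj1 : 1 ≤ j) (hj2 : j ≤ N - 1) (t : ℕ) (ht : t < m) :
    (((t:ℤ)+1)*N) * ((j:ℤ) - ((t:ℤ)+1)*N) * lamZ N m j t
        * (∏ r ∈ Sset m t, (muZ N m j t - muZ N m j r))
      = ((((m:ℤ)-t)*N + j) * (((m:ℤ)-t)*N)) * lamZ N m j (t+1)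
        * (∏ r ∈ Sset m t, (muZ N m j (t+1) - muZ N m j r)) := by
  have hfac0 : ∏ r ∈ Sset m t, (muZ N m j t - muZ N m j r)
      = (∏ r ∈ Sset m t, (4*(N:ℤ))) * (∏ r ∈ Sset m t, ((r:ℤ) - t))
        * (∏ r ∈ Sset m t, KfZ N m j t r) := by
    rw [← Finset.prod_mul_distrib, ← Finset.prod_mul_distrib]
    exact Finset.prod_congr rfl fun r _ => fac0 N m j t r
  have hfac1 : ∏ r ∈ Sset m t, (muZ N m j (t+1) - muZ N m j r)
      = (∏ r ∈ Sset m t, (4*(N:ℤ))) * (∏ r ∈ Sset m t, ((r:ℤ) - t - 1))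
        * (∏ r ∈ Sset m t, KfZ N m j t (r+1)) := by
    rw [← Finset.prod_mul_distrib, ← Finset.prod_mul_distrib]
    exact Finset.prod_congr rfl fun r _ => fac1 N m j t r
  have hKsh := prod_shift m t ht (KfZ N m j t)
  have hlin := prod_lin m t ht
  have hKu_ne : KfZ N m j t (t+1) ≠ 0 := KfZ_ne N m j hN hj1 hj2 t (t+1)
  have hu_ne : ((t:ℤ)+1) ≠ 0 := by omega
  rw [hfac0, hfac1]
  apply mul_right_cancel₀ (mul_ne_zero hKu_ne hu_ne)
  simp only [lamZ, KfZ] at hKsh ⊢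
  push_cast at hKsh ⊢
  linear_combination
    ((((t:ℤ)+1)*N) * ((j:ℤ) - ((t:ℤ)+1)*N) * (((m:ℤ) - 2*t)*N + j)
        * (∏ r ∈ Sset m t, (4*(N:ℤ))) * (∏ r ∈ Sset m t, (((m:ℤ) - t - r)*N + j))
        * (((m:ℤ) - t - (t+1))*N + j)) * hlin
    - ((((t:ℤ)+1)*N*((m:ℤ)-t)) * (∏ r ∈ Sset m t, (4*(N:ℤ)))
        * (∏ r ∈ Sset m t, ((r:ℤ) - t - 1))) * hKsh

end Core

open Polynomial in
lemma coeffC (N m j : ℕ) (hN : 2 ≤ N) (hj1 : 1 ≤ j) (hj2 : j ≤ N - 1) (c : ℕ → ℂ)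
    (hsys : ∀ s : ℕ, 1 ≤ s → s ≤ m →
      ∑ r ∈ range (m+1), ((((m:ℤ) - 2*r)*N + j : ℤ) : ℂ)^(2*s-1) * c r = 0)
    (t : ℕ) (ht : t < m) :
    (((((t:ℤ)+1)*N) * ((j:ℤ) - ((t:ℤ)+1)*N) : ℤ) : ℂ) * c (t+1)
      + ((((((m:ℤ)-t)*N + j) * (((m:ℤ)-t)*N)) : ℤ) : ℂ) * c t = 0 := by
  set Pl : ℂ[X] := ∏ r ∈ Sset m t, (X - C ((muZ N m j r : ℤ) : ℂ)) with hPl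
  have hm1 : 1 ≤ m := by omega
  have hdeg : Pl.natDegree < m := by
    have h1 := Polynomial.natDegree_prod_le (Sset m t) (fun r => X - C ((muZ N m j r : ℤ) : ℂ))
    have h2 : ∀ r ∈ Sset m t, (X - C ((muZ N m j r : ℤ) : ℂ)).natDegree = 1 :=
      fun r _ => natDegree_X_sub_C _
    have h3 : (Sset m t).card = m - 1 := by
      have ht1 : t ∈ range (m+1) := by simp; omega
      have ht2 : t + 1 ∈ (range (m+1)).erase t := by simp [Finset.mem_erase]; omega
      simp [Sset, Finset.card_erase_of_mem ht2, Finset.card_erase_of_mem ht1]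
    calc Pl.natDegree ≤ ∑ r ∈ Sset m t, (X - C ((muZ N m j r : ℤ) : ℂ)).natDegree := h1
      _ = (Sset m t).card := by rw [Finset.sum_congr rfl h2]; simp
      _ < m := by omega
  have hsys' : ∀ i, i < m → ∑ r ∈ range (m+1),
      ((muZ N m j r : ℤ) : ℂ)^i * ((lamZ N m j r : ℤ) : ℂ) * c r = 0 := by
    intro i hi
    have h := hsys (i+1) (by omega) (by omega)
    rw [← h]
    refine Finset.sum_congr rfl fun r _ => ?_
    have he : 2*(i+1)-1 = 2*i+1 := by omega
    rw [he]
    simp only [muZ]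
    rw [Int.cast_pow, ← pow_mul, ← pow_succ]
    simp only [lamZ]
  have hPsum : ∑ r ∈ range (m+1),
      Pl.eval ((muZ N m j r : ℤ) : ℂ) * ((lamZ N m j r : ℤ) : ℂ) * c r = 0 := by
    have hexp : ∀ r ∈ range (m+1), Pl.eval ((muZ N m j r : ℤ) : ℂ)
          * ((lamZ N m j r : ℤ) : ℂ) * c r
        = ∑ i ∈ range m, Pl.coeff i
            * (((muZ N m j r : ℤ) : ℂ)^i * ((lamZ N m j r : ℤ) : ℂ) * c r) := by
      intro r _
      rw [eval_eq_sum_range' hdeg, Finset.sum_mul, Finset.sum_mul]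
      exact Finset.sum_congr rfl fun i _ => by ring
    rw [Finset.sum_congr rfl hexp, Finset.sum_comm]
    have : ∀ i ∈ range m, ∑ r ∈ range (m+1), Pl.coeff i
        * (((muZ N m j r : ℤ) : ℂ)^i * ((lamZ N m j r : ℤ) : ℂ) * c r) = 0 := by
      intro i hi
      rw [← Finset.mul_sum, hsys' i (mem_range.mp hi), mul_zero]
    rw [Finset.sum_congr rfl this, Finset.sum_const_zero]
  have hpair : Pl.eval ((muZ N m j t : ℤ) : ℂ) * ((lamZ N m j t : ℤ) : ℂ) * c t
      + Pl.eval ((muZ N m j (t+1) : ℤ) : ℂ) * ((lamZ N m j (t+1) : ℤ) : ℂ) * c (t+1) = 0 := by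
    have hsub : ({t, t+1} : Finset ℕ) ⊆ range (m+1) := by
      intro a ha
      simp only [Finset.mem_insert, Finset.mem_singleton] at ha
      simp only [Finset.mem_range]
      omega
    have hvan : ∀ r ∈ range (m+1), r ∉ ({t, t+1} : Finset ℕ) →
        Pl.eval ((muZ N m j r : ℤ) : ℂ) * ((lamZ N m j r : ℤ) : ℂ) * c r = 0 := by
      intro r hr hnr
      simp only [Finset.mem_insert, Finset.mem_singleton, not_or] at hnr
      have hrS : r ∈ Sset m t := by
        rw [mem_Sset]
        exact ⟨hnr.2, hnr.1, mem_range.mp hr⟩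
      have : Pl.eval ((muZ N m j r : ℤ) : ℂ) = 0 := by
        rw [hPl, eval_prod]
        exact Finset.prod_eq_zero hrS (by simp)
      rw [this, zero_mul, zero_mul]
    have := Finset.sum_subset hsub hvan
    rw [hPsum] at this
    rw [← this, Finset.sum_pair (by omega : t ≠ t+1)]
  have hev0 : Pl.eval ((muZ N m j t : ℤ) : ℂ)
      = ((∏ r ∈ Sset m t, (muZ N m j t - muZ N m j r) : ℤ) : ℂ) := by
    rw [hPl, eval_prod]
    push_cast
    exact Finset.prod_congr rfl fun r _ => by simp
  have hev1 : Pl.eval ((muZ N m j (t+1) : ℤ) : ℂ)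
      = ((∏ r ∈ Sset m t, (muZ N m j (t+1) - muZ N m j r) : ℤ) : ℂ) := by
    rw [hPl, eval_prod]
    push_cast
    exact Finset.prod_congr rfl fun r _ => by simp
  have hIC : ((((t:ℤ)+1)*N) * ((j:ℤ) - ((t:ℤ)+1)*N) : ℂ) * ((lamZ N m j t : ℤ) : ℂ)
        * ((∏ r ∈ Sset m t, (muZ N m j t - muZ N m j r) : ℤ) : ℂ)
      = (((((m:ℤ)-t)*N + j) * (((m:ℤ)-t)*N) : ℤ) : ℂ) * ((lamZ N m j (t+1) : ℤ) : ℂ)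
        * ((∏ r ∈ Sset m t, (muZ N m j (t+1) - muZ N m j r) : ℤ) : ℂ) := by
    have := congrArg (fun z : ℤ => (z : ℂ)) (identI N m j hN hj1 hj2 t ht)
    push_cast at this ⊢
    linear_combination this
  have hL1 : ((lamZ N m j (t+1) : ℤ) : ℂ) ≠ 0 := by
    exact_mod_cast Int.cast_ne_zero.mpr (lamZ_ne N m j hN hj1 hj2 (t+1))
  have hP1 : ((∏ r ∈ Sset m t, (muZ N m j (t+1) - muZ N m j r) : ℤ) : ℂ) ≠ 0 := by
    rw [Int.cast_ne_zero]
    rw [Finset.prod_ne_zero_iff]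
    intro r hr
    rw [fac1]
    have hrS := mem_Sset.mp hr
    refine mul_ne_zero (mul_ne_zero ?_ ?_) (KfZ_ne N m j hN hj1 hj2 t (r+1))
    · have : (N:ℤ) ≠ 0 := by exact_mod_cast (by omega : N ≠ 0)
      intro hcon
      apply this
      linarith [hcon]
    · have : r ≠ t + 1 := hrS.1
      omega
  have hz : ((lamZ N m j (t+1) : ℤ) : ℂ)
      * ((∏ r ∈ Sset m t, (muZ N m j (t+1) - muZ N m j r) : ℤ) : ℂ)
      * ((((((t:ℤ)+1)*N) * ((j:ℤ) - ((t:ℤ)+1)*N) : ℤ) : ℂ) * c (t+1)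
        + ((((((m:ℤ)-t)*N + j) * (((m:ℤ)-t)*N)) : ℤ) : ℂ) * c t) = 0 := by
    rw [hev0, hev1] at hpair
    push_cast at hIC hpair ⊢
    linear_combination ((((t:ℂ)+1)*(N:ℂ)) * ((j:ℂ) - ((t:ℂ)+1)*N)) * hpair - (c t) * hIC
  rcases mul_eq_zero.mp hz with h | h
  · exact absurd h (mul_ne_zero hL1 hP1)
  · exact h

end Helpers

namespace Helpers

lemma numer_eq (cc : ℂ) (p q Nn mm : ℕ) (hq : 1 ≤ q) (hN : 1 ≤ Nn) (z w : ℂ)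
    (hp : p = 0 ∨ 1 ≤ p) :
    cc * ((4*p*q) * (w^(p-1) * z^(q-1))) * (z^Nn - w^Nn)
        - 2*mm*cc*(2*p*Nn*(w^(p-1)*z^q)*z^(Nn-1) - 2*q*Nn*(w^p*z^(q-1))*w^(Nn-1))
      = 4*cc*p*((q:ℂ) - ((mm*Nn : ℕ):ℂ))*w^(p-1)*z^(q-1+Nn)
        + 4*cc*q*(((mm*Nn:ℕ):ℂ) - (p:ℂ))*w^(p+Nn-1)*z^(q-1) := by
  obtain ⟨q', rfl⟩ : ∃ q', q = q' + 1 := ⟨q - 1, by omega⟩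
  obtain ⟨n', rfl⟩ : ∃ n', Nn = n' + 1 := ⟨Nn - 1, by omega⟩
  rcases hp with rfl | hp
  · simp only [Nat.zero_sub, Nat.add_sub_cancel, Nat.zero_add, Nat.cast_zero, pow_zero]
    push_cast
    ring
  · obtain ⟨p', rfl⟩ : ∃ p', p = p' + 1 := ⟨p - 1, by omega⟩
    simp only [Nat.add_sub_cancel]
    have e1 : p' + 1 + (n' + 1) - 1 = p' + (n' + 1) := by omega
    have e2 : q' + 1 + (n' + 1) - 1 = q' + (n' + 1) := by omega
    rw [e1]
    push_cast
    ring

lemma main_vanish (N m j : ℕ) (hN : 2 ≤ N) (hj1 : 1 ≤ j) (hj2 : j ≤ N - 1) (c : ℕ → ℂ)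
    (hsysR : ∀ s : ℕ, 1 ≤ s → s ≤ m →
      ∑ r ∈ range (m+1), ((((m:ℤ) - 2*r)*N + j : ℤ) : ℂ)^(2*s-1) * c r = 0)
    (x : ℝ × ℝ)
    (hreg : ∀ k < N, (-Real.sin (Real.pi * k / N)) * x.1
      + Real.cos (Real.pi * k / N) * x.2 ≠ 0) :
    LopC' N m (combo (m+1) c (fun r => r*N) (fun r => (m-r)*N+j)) x = 0 := by
  have hD : zOf x ^ N - wOf x ^ N ≠ 0 := denom_ne N (by omega) x hreg
  rw [LopC'_combo N m hN (m+1) c _ _ x hreg]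
  set Pf : ℕ → ℕ := fun r => r*N with hPf
  set Qf : ℕ → ℕ := fun r => (m-r)*N+j with hQf
  set z := zOf x
  set w := wOf x
  set Xt : ℕ → ℂ := fun r =>
    4*(c r)*(Pf r)*((Qf r : ℂ) - ((m*N : ℕ):ℂ))*w^(Pf r - 1)*z^(Qf r - 1 + N) with hXt
  set Yt : ℕ → ℂ := fun r =>
    4*(c r)*(Qf r)*(((m*N:ℕ):ℂ) - ((Pf r : ℕ):ℂ))*w^(Pf r + N - 1)*z^(Qf r - 1) with hYt
  have hterm : ∀ r ∈ range (m+1),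
      c r * ((4 * Pf r * Qf r) * Mc (Pf r - 1) (Qf r - 1) x
        - 2 * m * ((2 * Pf r * N * (w ^ (Pf r - 1) * z ^ Qf r) * z ^ (N - 1)
            - 2 * Qf r * N * (w ^ Pf r * z ^ (Qf r - 1)) * w ^ (N - 1)) / (z ^ N - w ^ N)))
      = (Xt r + Yt r) / (z ^ N - w ^ N) := by
    intro r _
    rw [eq_div_iff hD]
    have hbase : c r * ((4*(Pf r)*(Qf r)) * (w^(Pf r - 1) * z^(Qf r - 1))) * (z^N - w^N)
        - 2*m*(c r)*(2*(Pf r)*N*(w^(Pf r - 1)*z^(Qf r))*z^(N-1)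
          - 2*(Qf r)*N*(w^(Pf r)*z^(Qf r - 1))*w^(N-1))
        = Xt r + Yt r := by
      rw [hXt, hYt]
      refine numer_eq (c r) (Pf r) (Qf r) N m ?_ (by omega) z w ?_
      · simp only [hQf]; omega
      · simp only [hPf]
        rcases Nat.eq_zero_or_pos r with rfl | hr
        · left; omega
        · right
          have : N ≤ r * N := Nat.le_mul_of_pos_left N hr
          omega
    rw [← hbase]
    have hMc : Mc (Pf r - 1) (Qf r - 1) x = w^(Pf r - 1) * z^(Qf r - 1) := rfl
    rw [hMc]
    field_simp
  rw [Finset.sum_congr rfl hterm, ← Finset.sum_div]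
  have hsum : ∑ r ∈ range (m+1), (Xt r + Yt r) = 0 := by
    rw [Finset.sum_add_distrib, Finset.sum_range_succ' Xt m, Finset.sum_range_succ Yt m]
    have hX0 : Xt 0 = 0 := by simp [hXt, hPf]
    have hYm : Yt m = 0 := by simp [hYt, hPf]
    rw [hX0, hYm, add_zero, add_zero, ← Finset.sum_add_distrib]
    refine Finset.sum_eq_zero fun r hr => ?_
    have hrm : r < m := mem_range.mp hr
    have hCr := coeffC N m j hN hj1 hj2 c hsysR r hrm
    have ex1 : Pf (r+1) - 1 = Pf r + N - 1 := by
      simp only [hPf]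
      have hNr : r * N + N = (r+1)*N := by ring
      omega
    have ex2 : Qf (r+1) - 1 + N = Qf r - 1 := by
      simp only [hQf]
      have h1 : m - r = (m - (r+1)) + 1 := by omega
      rw [h1, add_mul, one_mul]
      generalize (m - (r+1))*N = XX
      omega
    rw [hXt, hYt]
    simp only [ex1, ex2]
    have hc1 : ((Qf (r+1) : ℕ) : ℂ) = ((m:ℂ) - (r:ℂ) - 1)*N + j := by
      simp only [hQf]
      push_cast [Nat.cast_sub (show r+1 ≤ m by omega)]
      ring
    have hc2 : ((Qf r : ℕ) : ℂ) = ((m:ℂ) - (r:ℂ))*N + j := by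
      simp only [hQf]
      push_cast [Nat.cast_sub (show r ≤ m by omega)]
      ring
    have hc3 : ((Pf (r+1) : ℕ) : ℂ) = ((r:ℂ)+1)*N := by simp only [hPf]; push_cast; ring
    have hc4 : ((Pf r : ℕ) : ℂ) = (r:ℂ)*N := by simp only [hPf]; push_cast; ring
    rw [hc1, hc2, hc3, hc4]
    push_cast at hCr ⊢
    linear_combination (4 * w^(Pf r + N - 1) * z^(Qf r - 1)) * hCr
  rw [hsum, zero_div]

end Helpers


/-- The basic quasiinvariants `q_j`, `q̄_j` of `I₂(N)` are annihilated by the gauged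
Calogero–Moser operator, i.e. they are `m`-harmonic. -/
theorem stmt16 (N m : ℕ) (hN : 2 ≤ N) (j : ℕ) (hj1 : 1 ≤ j) (hj2 : j ≤ N - 1)
    (a : Fin (m+1) → ℂ) (ha : a ≠ 0)
    (hsys : ∀ s : ℕ, 1 ≤ s → s ≤ m →
      ∑ t : Fin (m+1),
        (((((m:ℤ) - 2 * (t:ℕ)) * N + j : ℤ)) : ℂ)^(2*s-1) * a t = 0) :
    ∀ x : ℝ × ℝ,
      (∀ k < N, (-Real.sin (Real.pi * k / N)) * x.1 + Real.cos (Real.pi * k / N) * x.2 ≠ 0) →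
      LopC N m (qj N m j a) x = 0 ∧ LopC N m (qbarj N m j a) x = 0 := by
  intro x hreg
  classical
  set c : ℕ → ℂ := fun r => if h : r < m+1 then a ⟨r, h⟩ else 0 with hc
  have hceq : ∀ t : Fin (m+1), c (t : ℕ) = a t := by
    intro t
    simp only [hc]
    rw [dif_pos t.isLt]
  have hsysR : ∀ s : ℕ, 1 ≤ s → s ≤ m →
      ∑ r ∈ range (m+1), ((((m:ℤ) - 2*r)*N + j : ℤ) : ℂ)^(2*s-1) * c r = 0 := by
    intro s hs1 hs2
    rw [← Fin.sum_univ_eq_sum_range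
      (fun r => ((((m:ℤ) - 2*r)*N + j : ℤ) : ℂ)^(2*s-1) * c r) (m+1)]
    rw [← hsys s hs1 hs2]
    exact Finset.sum_congr rfl fun t _ => by rw [hceq]
  have hqj : qj N m j a = Helpers.combo (m+1) c (fun r => r*N) (fun r => (m-r)*N+j) := by
    funext y
    rw [qj, Helpers.combo]
    rw [← Fin.sum_univ_eq_sum_range
      (fun r => c r * Helpers.Mc (r*N) ((m-r)*N+j) y) (m+1)]
    refine Finset.sum_congr rfl fun t _ => ?_
    rw [hceq]
    simp only [Helpers.Mc, Helpers.wOf]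
    ring
  have hmain : LopC N m (qj N m j a) x = 0 := by
    rw [hqj]
    exact Helpers.main_vanish N m j hN hj1 hj2 c hsysR x hreg
  constructor
  · exact hmain
  · have hqbar : qbarj N m j a
        = fun y => (starRingEnd ℂ)
            (Helpers.combo (m+1) c (fun r => r*N) (fun r => (m-r)*N+j) y) := by
      funext y
      rw [← hqj]
      rw [qbarj, qj, map_sum]
      refine Finset.sum_congr rfl fun t _ => ?_
      rw [map_mul, map_mul, map_pow, map_pow, Complex.conj_conj]
    rw [hqbar]
    have := Helpers.LopC'_conj N m (m+1) c (fun r => r*N) (fun r => (m-r)*N+j) x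
    have hLL : LopC N m (fun y => (starRingEnd ℂ)
        (Helpers.combo (m+1) c (fun r => r*N) (fun r => (m-r)*N+j) y)) x
        = Helpers.LopC' N m (fun y => (starRingEnd ℂ)
        (Helpers.combo (m+1) c (fun r => r*N) (fun r => (m-r)*N+j) y)) x := rfl
    rw [hLL, this]
    have h0 : Helpers.LopC' N m
        (Helpers.combo (m+1) c (fun r => r*N) (fun r => (m-r)*N+j)) x = 0 :=
      Helpers.main_vanish N m j hN hj1 hj2 c hsysR x hreg
    rw [h0, map_zero]
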